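/- For the synchronous generator model with P_e < (D_d ω* + τ_m)²/(4(D_d+D_m)), the set Ω_p = {ω > ω̄_u} is forward invariant under the dynamics M ω̇ = −(D_m+D_d)ω − P_e/ω + τ_m + D_d ω*, and every solution starting in Ω_p converges to ω̄_s; in particular the function V(ω) = ½M(ω − ω̄_s)² is strictly decreasing along nonequilibrium solutions in Ω_p. -/

import Mathlib

set_option maxHeartbeats 1000000

open Set Filter Topology

lemma swing_barrier (ω F : ℝ → ℝ) (c : ℝ)
    (hd : ∀ t : ℝ, 0 ≤ t → HasDerivAt ω (F (ω t)) t)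
    (h0 : c < ω 0) (hFc : 0 < F c) : ∀ t : ℝ, 0 ≤ t → c < ω t := by
  intro t1 ht1
  by_contra hcon
  push_neg at hcon
  have hcont : ContinuousOn ω (Icc 0 t1) := fun t ht =>
    ((hd t ht.1).continuousAt).continuousWithinAt
  set S : Set ℝ := Icc 0 t1 ∩ ω ⁻¹' (Iic c) with hS
  have hSclosed : IsClosed S :=
    hcont.preimage_isClosed_of_isClosed isClosed_Icc isClosed_Iic
  have ht1S : t1 ∈ S := ⟨⟨ht1, le_refl t1⟩, hcon⟩
  have hSne : S.Nonempty := ⟨t1, ht1S⟩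
  have hSbdd : BddBelow S := ⟨0, fun x hx => hx.1.1⟩
  set t0 := sInf S with ht0
  have ht0S : t0 ∈ S := hSclosed.csInf_mem hSne hSbdd
  have ht0nonneg : 0 ≤ t0 := ht0S.1.1
  have h0notS : (0:ℝ) ∉ S := fun h => absurd h.2 (not_le.2 h0)
  have ht0pos : 0 < t0 := ht0nonneg.lt_of_ne (fun h => h0notS (h ▸ ht0S))
  have hlt : ∀ t ∈ Ico (0:ℝ) t0, c < ω t := by
    intro t ht
    by_contra h
    push_neg at h
    have : t ∈ S := ⟨⟨ht.1, ht.2.le.trans ht0S.1.2⟩, h⟩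
    exact absurd (csInf_le hSbdd this) (not_le.2 ht.2)
  have hnb : (𝓝[Ico (0:ℝ) t0] t0).NeBot := by
    rw [← mem_closure_iff_nhdsWithin_neBot, closure_Ico (ne_of_lt ht0pos)]
    exact ⟨ht0nonneg, le_refl t0⟩
  have hca : ContinuousAt ω t0 := (hd t0 ht0nonneg).continuousAt
  have hge : c ≤ ω t0 := by
    refine ge_of_tendsto (x := 𝓝[Ico (0:ℝ) t0] t0)
      (hca.continuousWithinAt.tendsto) ?_
    filter_upwards [self_mem_nhdsWithin] with t ht
    exact (hlt t ht).le
  have hωt0 : ω t0 = c := le_antisymm ht0S.2 hge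
  have hdw : HasDerivWithinAt ω (F c) (Ico 0 t0) t0 := by
    have := (hd t0 ht0nonneg).hasDerivWithinAt (s := Ico 0 t0)
    rwa [hωt0] at this
  rw [hasDerivWithinAt_iff_tendsto_slope] at hdw
  have hIco : Ico (0:ℝ) t0 \ {t0} = Ico 0 t0 := by
    ext x
    simp only [mem_diff, mem_Ico, mem_singleton_iff]
    constructor
    · rintro ⟨h, -⟩; exact h
    · rintro ⟨h1, h2⟩; exact ⟨⟨h1, h2⟩, ne_of_lt h2⟩
  rw [hIco] at hdw
  have hle : F c ≤ 0 := by
    refine le_of_tendsto hdw ?_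
    filter_upwards [self_mem_nhdsWithin] with t ht
    have hnum : 0 ≤ ω t - ω t0 := by rw [hωt0]; exact sub_nonneg.2 (hlt t ht).le
    have hden : t - t0 ≤ 0 := sub_nonpos.2 ht.2.le
    rw [slope_def_field]
    exact div_nonpos_of_nonneg_of_nonpos hnum hden
  exact absurd hle (not_le.2 hFc)

theorem swing_equation_ROA
    (M Dm Dd τm ωst Pe : ℝ)
    (hM : 0 < M) (hDm : 0 < Dm) (hDd : 0 < Dd) (hτ : 0 < τm) (hω : 0 < ωst) (hPe : 0 < Pe)
    (hP : Pe < (Dd * ωst + τm) ^ 2 / (4 * (Dd + Dm))) :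
    let Δ := (Dd * ωst + τm) ^ 2 - 4 * (Dd + Dm) * Pe
    let ωs := (Dd * ωst + τm + Real.sqrt Δ) / (2 * (Dd + Dm))
    let ωu := (Dd * ωst + τm - Real.sqrt Δ) / (2 * (Dd + Dm))
    let f : ℝ → ℝ := fun w => (-(Dm + Dd) * w - Pe / w + τm + Dd * ωst) / M
    (∀ ω : ℝ → ℝ,
        (∀ t : ℝ, 0 ≤ t → HasDerivAt ω (f (ω t)) t) → ωu < ω 0 →
          (∀ t : ℝ, 0 ≤ t → ωu < ω t) ∧
            Filter.Tendsto ω Filter.atTop (nhds ωs)) ∧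
      (∀ w : ℝ, ωu < w → w ≠ ωs → M * (w - ωs) * f w < 0) := by
  intro Δ ωs ωu f
  have hΔdef : Δ = (Dd * ωst + τm) ^ 2 - 4 * (Dd + Dm) * Pe := rfl
  have hωsdef : ωs = (Dd * ωst + τm + Real.sqrt Δ) / (2 * (Dd + Dm)) := rfl
  have hωudef : ωu = (Dd * ωst + τm - Real.sqrt Δ) / (2 * (Dd + Dm)) := rfl
  have hfdef : f = fun w => (-(Dm + Dd) * w - Pe / w + τm + Dd * ωst) / M := rfl
  clear_value Δ ωs ωu f
  set s := Real.sqrt Δ with hsdef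
  rw [hsdef] at hωsdef hωudef
  have hD : 0 < Dd + Dm := by linarith
  have hb : 0 < Dd * ωst + τm := by positivity
  have hΔpos : 0 < Δ := by
    have h4D : (0:ℝ) < 4 * (Dd + Dm) := by linarith
    have := (lt_div_iff₀ h4D).1 hP
    rw [hΔdef]; linarith
  have hs2 : s ^ 2 = Δ := Real.sq_sqrt hΔpos.le
  have hspos : 0 < s := Real.sqrt_pos.2 hΔpos
  have hslt : s < Dd * ωst + τm := by
    rw [hsdef]
    have h1 : Δ < (Dd * ωst + τm) ^ 2 := by rw [hΔdef]; nlinarith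
    calc Real.sqrt Δ < Real.sqrt ((Dd * ωst + τm)^2) := Real.sqrt_lt_sqrt hΔpos.le h1
      _ = Dd * ωst + τm := Real.sqrt_sq hb.le
  have hωupos : 0 < ωu := by
    rw [hωudef]; exact div_pos (by linarith) (by linarith)
  have hωuωs : ωu < ωs := by
    rw [hωudef, hωsdef, div_lt_div_iff₀ (by linarith) (by linarith)]
    nlinarith
  have hsum : (Dd + Dm) * (ωs + ωu) = Dd * ωst + τm := by
    rw [hωsdef, hωudef]; field_simp; ring
  have hprod : (Dd + Dm) * (ωs * ωu) = Pe := by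
    rw [hωsdef, hωudef]; field_simp; rw [hΔdef] at hs2; nlinarith [hs2]
  have hquad : ∀ w : ℝ, (Dd + Dm) * w^2 - (Dd * ωst + τm) * w + Pe
      = (Dd + Dm) * ((w - ωs) * (w - ωu)) := by
    intro w
    linear_combination w * hsum - hprod
  have hfw : ∀ w : ℝ, w ≠ 0 → M * f w * w = -((Dd + Dm) * ((w - ωs) * (w - ωu))) := by
    intro w hw
    rw [hfdef]
    field_simp
    linear_combination (-1) * hquad w
  -- the strict decrease statement (second conjunct)
  have hMsign : ∀ w : ℝ, ωu < w → w ≠ ωs → M * (w - ωs) * f w < 0 := by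
    intro w hw hne
    have hwpos : 0 < w := lt_trans hωupos hw
    have h1 : M * (w - ωs) * f w * w = -((Dd + Dm) * ((w - ωs)^2 * (w - ωu))) := by
      linear_combination (w - ωs) * hfw w hwpos.ne'
    have hsq : 0 < (w - ωs)^2 := by
      have := sub_ne_zero.2 hne
      positivity
    have h2 : M * (w - ωs) * f w * w < 0 := by
      rw [h1]
      have := mul_pos hD (mul_pos hsq (sub_pos.2 hw))
      linarith
    by_contra hcontra
    push_neg at hcontra
    nlinarith [mul_nonneg hcontra hwpos.le]
  refine ⟨?_, hMsign⟩
  intro ω hωd hω0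
  -- choose barrier level c
  set c := (ωu + min (ω 0) ωs) / 2 with hcdef
  have hmin : ωu < min (ω 0) ωs := lt_min hω0 hωuωs
  have hc1 : ωu < c := by rw [hcdef]; linarith
  have hc2 : c < ω 0 := by
    have := min_le_left (ω 0) ωs
    rw [hcdef]; linarith [hmin]
  have hc3 : c < ωs := by
    have := min_le_right (ω 0) ωs
    rw [hcdef]; linarith [hmin]
  have hcpos : 0 < c := hωupos.trans hc1
  have hfc : 0 < f c := by
    have h1 := hfw c hcpos.ne'
    have hneg : (c - ωs) * (c - ωu) < 0 :=
      mul_neg_of_neg_of_pos (by linarith) (by linarith)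
    have h2 : 0 < M * f c * c := by
      rw [h1]
      nlinarith [mul_neg_of_pos_of_neg hD hneg]
    by_contra hcontra
    push_neg at hcontra
    nlinarith [mul_nonpos_of_nonpos_of_nonneg (mul_nonpos_of_nonneg_of_nonpos hM.le hcontra) hcpos.le]
  have hinv : ∀ t : ℝ, 0 ≤ t → c < ω t := swing_barrier ω f c hωd hc2 hfc
  refine ⟨fun t ht => lt_trans hc1 (hinv t ht), ?_⟩
  -- Lyapunov function g
  set g : ℝ → ℝ := fun t => (ω t - ωs)^2 with hgdef
  have hg' : ∀ t : ℝ, 0 ≤ t → HasDerivAt g (2 * (ω t - ωs) * f (ω t)) t := by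
    intro t ht
    have h := ((hωd t ht).sub_const ωs).pow 2
    norm_num at h
    exact h
  have hsign : ∀ w : ℝ, ωu < w → 2 * (w - ωs) * f w ≤ 0 := by
    intro w hw
    rcases eq_or_ne w ωs with h | h
    · simp [h]
    · have h1 := hMsign w hw h
      by_contra hcon
      push_neg at hcon
      have h0 : 0 ≤ (w - ωs) * f w := by nlinarith
      nlinarith [mul_nonneg hM.le h0]
  have hganti : AntitoneOn g (Ici 0) := by
    refine antitoneOn_of_deriv_nonpos (convex_Ici 0)
      (fun t ht => ((hg' t ht).continuousAt).continuousWithinAt)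
      (fun x hx => ?_) (fun x hx => ?_)
    · rw [interior_Ici] at hx
      exact ((hg' x (le_of_lt hx)).differentiableAt).differentiableWithinAt
    · rw [interior_Ici] at hx
      rw [(hg' x (le_of_lt hx)).deriv]
      exact hsign (ω x) (lt_trans hc1 (hinv x (le_of_lt hx)))
  have hgnonneg : ∀ t : ℝ, 0 ≤ g t := fun t => sq_nonneg _
  have hsmall : ∀ ε : ℝ, 0 < ε → ∃ T : ℝ, 0 ≤ T ∧ g T < ε := by
    intro ε hε
    by_contra hcon
    push_neg at hcon
    set B := ωs + Real.sqrt (g 0) with hBdef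
    have hB : ∀ t : ℝ, 0 ≤ t → ω t ≤ B := by
      intro t ht
      have hgle : g t ≤ g 0 := hganti self_mem_Ici ht ht
      have h1 : |ω t - ωs| ≤ Real.sqrt (g 0) := by
        rw [← Real.sqrt_sq_eq_abs]
        exact Real.sqrt_le_sqrt hgle
      have h2 := (abs_le.1 h1).2
      rw [hBdef]; linarith
    set K := Icc c B ∩ (fun w => (w - ωs)^2) ⁻¹' Ici ε with hKdef
    have hKcpt : IsCompact K :=
      isCompact_Icc.inter_right (isClosed_Ici.preimage (by continuity))
    have hω0K : ω 0 ∈ K := ⟨⟨(hinv 0 le_rfl).le, hB 0 le_rfl⟩, hcon 0 le_rfl⟩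
    have hKne : ∀ w ∈ K, w ≠ (0:ℝ) := fun w hw => (lt_of_lt_of_le hcpos hw.1.1).ne'
    have hfK : ContinuousOn f K := by
      rw [hfdef]
      exact (((continuousOn_const.mul continuousOn_id).sub
        (continuousOn_const.div continuousOn_id hKne)).add continuousOn_const
        |>.add continuousOn_const).div_const M
    have hcontH : ContinuousOn (fun w => 2 * (w - ωs) * f w) K :=
      ((continuousOn_const.mul (continuousOn_id.sub continuousOn_const))).mul hfK
    obtain ⟨w0, hw0K, hmax⟩ := hKcpt.exists_isMaxOn ⟨ω 0, hω0K⟩ hcontH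
    have hw0u : ωu < w0 := lt_of_lt_of_le hc1 hw0K.1.1
    have hw0ne : w0 ≠ ωs := by
      intro h
      have h2 := hw0K.2
      simp only [mem_preimage, mem_Ici, h, sub_self] at h2
      norm_num at h2
      linarith
    have hneg : 2 * (w0 - ωs) * f w0 < 0 := by
      have h1 := hMsign w0 hw0u hw0ne
      rcases (hsign w0 hw0u).lt_or_eq with h | h
      · exact h
      · exfalso; nlinarith [h]
    set δ := -(2 * (w0 - ωs) * f w0) with hδdef
    have hδpos : 0 < δ := by rw [hδdef]; linarith
    set φ : ℝ → ℝ := fun t => g t + δ * t with hφdef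
    have hφ' : ∀ t : ℝ, 0 ≤ t → HasDerivAt φ (2 * (ω t - ωs) * f (ω t) + δ) t := by
      intro t ht
      have h2 : HasDerivAt (fun t : ℝ => δ * t) δ t := by
        simpa using (hasDerivAt_id t).const_mul δ
      exact (hg' t ht).add h2
    have hφanti : AntitoneOn φ (Ici 0) := by
      refine antitoneOn_of_deriv_nonpos (convex_Ici 0)
        (fun t ht => ((hφ' t ht).continuousAt).continuousWithinAt)
        (fun x hx => ?_) (fun x hx => ?_)
      · rw [interior_Ici] at hx
        exact ((hφ' x (le_of_lt hx)).differentiableAt).differentiableWithinAt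
      · rw [interior_Ici] at hx
        rw [(hφ' x (le_of_lt hx)).deriv]
        have hKx : ω x ∈ K :=
          ⟨⟨(hinv x (le_of_lt hx)).le, hB x (le_of_lt hx)⟩, hcon x (le_of_lt hx)⟩
        have h3 := hmax hKx
        simp only [Set.mem_setOf_eq] at h3
        rw [hδdef]
        linarith
    set T := g 0 / δ + 1 with hTdef
    have hT0 : 0 ≤ T := by
      rw [hTdef]
      have := div_nonneg (hgnonneg 0) hδpos.le
      linarith
    have hφT : φ T ≤ φ 0 := hφanti self_mem_Ici hT0 hT0
    have hδT : δ * T = g 0 + δ := by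
      rw [hTdef]; field_simp
    have hφ0 : φ 0 = g 0 := by rw [hφdef]; simp
    have hgT : g T ≤ -δ := by
      have : g T + δ * T ≤ g 0 := by rw [← hφ0]; exact hφT
      rw [hδT] at this; linarith
    linarith [hgnonneg T]
  have hgto : Tendsto g atTop (𝓝 0) := by
    rw [Metric.tendsto_atTop]
    intro ε hε
    obtain ⟨T, hT0, hTε⟩ := hsmall ε hε
    refine ⟨T, fun t ht => ?_⟩
    have h1 : g t ≤ g T := hganti (mem_Ici.2 hT0) (mem_Ici.2 (hT0.trans ht)) ht
    rw [Real.dist_eq]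
    rw [sub_zero, abs_of_nonneg (hgnonneg t)]
    linarith
  rw [tendsto_iff_dist_tendsto_zero]
  have h1 : (fun t => dist (ω t) ωs) = fun t => Real.sqrt (g t) := by
    funext t
    rw [Real.dist_eq, ← Real.sqrt_sq_eq_abs]
  rw [h1]
  have h2 := (Real.continuous_sqrt.tendsto 0).comp hgto
  simpa [Function.comp_def, Real.sqrt_zero] using h2
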